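/- For any α in an algebraically closed field F with α ∉ {0,1}, the algebra E^α_{5,18} : e₁² = e₄, e₂² = e₄ + e₅, e₃² = e₄ + α e₅, e₄² = e₅ is isomorphic to E^{α⁻¹}_{5,18}, via an isomorphism induced by the automorphism of E_{4,5} sending e₁ ↦ −√α e₁, e₂ ↦ √α e₃, e₃ ↦ √α e₂, e₄ ↦ α e₄ (for a chosen square root √α of α). -/
import Mathlib


/-- Multiplication of `E₅,₁₈^α : e₁² = e₄, e₂² = e₄ + e₅, e₃² = e₄ + α e₅, e₄² = e₅`
on `F⁵` (all other products of natural basis vectors are zero). -/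
def mulE518 {F : Type*} [Field F] (α : F) :
    (Fin 5 → F) → (Fin 5 → F) → (Fin 5 → F) :=
  fun x y => ![0, 0, 0, x 0 * y 0 + x 1 * y 1 + x 2 * y 2,
    x 1 * y 1 + α * (x 2 * y 2) + x 3 * y 3]


def sigmaLin {F : Type*} [Field F] (α s : F) : (Fin 5 → F) →ₗ[F] (Fin 5 → F) where
  toFun x := ![-s * x 0, s * x 2, s * x 1, α * x 3, α ^ 2 * x 4]
  map_add' x y := by
    funext i; fin_cases i <;>
      simp [Matrix.cons_val_zero, Matrix.cons_val_one] <;> ring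
  map_smul' c x := by
    funext i; fin_cases i <;>
      simp [Matrix.cons_val_zero, Matrix.cons_val_one] <;> ring

def sigmaEquiv {F : Type*} [Field F] (α s : F) (hα0 : α ≠ 0) (hs0 : s ≠ 0) :
    (Fin 5 → F) ≃ₗ[F] (Fin 5 → F) :=
  LinearEquiv.ofLinear (sigmaLin α s) (sigmaLin α⁻¹ s⁻¹)
    (by
      apply LinearMap.ext; intro x
      funext i; fin_cases i <;>
        simp [sigmaLin] <;> field_simp)
    (by
      apply LinearMap.ext; intro x
      funext i; fin_cases i <;>
        simp [sigmaLin] <;> field_simp)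

set_option maxHeartbeats 800000 in
/-- For any `α ∉ {0,1}` in an algebraically closed field `F` and any
square root `s` of `α`, the algebra `E₅,₁₈^α` is isomorphic to `E₅,₁₈^{α⁻¹}`, via an
isomorphism induced by the automorphism of `E₄,₅` sending
`e₁ ↦ −s e₁, e₂ ↦ s e₃, e₃ ↦ s e₂, e₄ ↦ α e₄`. -/
theorem stmt19 {F : Type*} [Field F] [IsAlgClosed F] (α s : F)
    (hα0 : α ≠ 0) (hα1 : α ≠ 1) (hs : s ^ 2 = α) :
    ∃ σ : (Fin 5 → F) ≃ₗ[F] (Fin 5 → F),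
      σ (Pi.single 0 1) = (-s) • (Pi.single 0 1 : Fin 5 → F) ∧
      σ (Pi.single 1 1) = s • (Pi.single 2 1 : Fin 5 → F) ∧
      σ (Pi.single 2 1) = s • (Pi.single 1 1 : Fin 5 → F) ∧
      σ (Pi.single 3 1) = α • (Pi.single 3 1 : Fin 5 → F) ∧
      ∀ x y, σ (mulE518 α⁻¹ x y) = mulE518 α (σ x) (σ y) := by
  have hs0 : s ≠ 0 := by
    intro h; apply hα0; rw [← hs, h]; ring
  refine ⟨sigmaEquiv α s hα0 hs0, ?_, ?_, ?_, ?_, ?_⟩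
  · funext i; fin_cases i <;>
      simp [sigmaEquiv, sigmaLin, Pi.single_apply]
  · funext i; fin_cases i <;>
      simp [sigmaEquiv, sigmaLin, Pi.single_apply]
  · funext i; fin_cases i <;>
      simp [sigmaEquiv, sigmaLin, Pi.single_apply]
  · funext i; fin_cases i <;>
      simp [sigmaEquiv, sigmaLin, Pi.single_apply]
  · intro x y
    funext i
    fin_cases i <;>
      simp [sigmaEquiv, sigmaLin, mulE518] <;>
        (rw [← hs]; first | (field_simp; ring) | ring)
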